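/- Let p be a prime, S a finite p-group, and X a finite bifree (S,S)-biset with |X|/|S| prime to p, such that Pre-Fix(X) is level-wise closed. Fix P ≤ S and assume |X^{(P,φ)}| = |X^{(P,ψ)}| for all φ, ψ ∈ Hom_{Pre-Fix(X)}(P,S). Then for every φ ∈ Hom_{Pre-Fix(X)}(P,S): (a) φ(P) is fully Pre-Fix(X)-centralized if and only if |X^{(P,φ)}|/|C_S(φ(P))| is not divisible by p; and (b) Σ_{ψ ∈ Hom_{Pre-Fix(X)}(P,φ(P))} |X^{(P,ψ)}| = |Aut_{Pre-Fix(X)}(φ(P))| · |X^{(P,φ)}|, and φ(P) is fully Pre-Fix(X)-normalized if and only if |Aut_{Pre-Fix(X)}(φ(P))| · |X^{(P,φ)}| / |N_S(φ(P))| is not divisible by p. -/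

import Mathlib

/-! ## Bisets -/

/-- A `(G,H)`-biset structure on a type `X`: a left `H`-action and a right `G`-action
that commute with each other. -/
structure BisetAction (G H : Type*) [Group G] [Group H] (X : Type*) where
  /-- the left `H`-action -/
  smul : H → X → X
  /-- the right `G`-action -/
  rmul : X → G → X
  one_smul : ∀ x, smul 1 x = x
  mul_smul : ∀ h₁ h₂ x, smul (h₁ * h₂) x = smul h₁ (smul h₂ x)
  rmul_one : ∀ x, rmul x 1 = x
  rmul_mul : ∀ x g₁ g₂, rmul x (g₁ * g₂) = rmul (rmul x g₁) g₂
  smul_rmul : ∀ h x g, rmul (smul h x) g = smul h (rmul x g)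

namespace BisetAction

variable {G H K : Type*} [Group G] [Group H] [Group K] {X Y Z : Type*}

lemma smul_smul (A : BisetAction G H X) (h₁ h₂ : H) (x : X) :
    A.smul h₁ (A.smul h₂ x) = A.smul (h₁ * h₂) x := (A.mul_smul h₁ h₂ x).symm

lemma rmul_rmul (A : BisetAction G H X) (x : X) (g₁ g₂ : G) :
    A.rmul (A.rmul x g₁) g₂ = A.rmul x (g₁ * g₂) := (A.rmul_mul x g₁ g₂).symm

/-- The biset is left-free. -/
def LeftFree (A : BisetAction G H X) : Prop := ∀ (h : H) (x : X), A.smul h x = x → h = 1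

/-- The biset is right-free. -/
def RightFree (A : BisetAction G H X) : Prop := ∀ (g : G) (x : X), A.rmul x g = x → g = 1

/-- The biset is bifree: both actions are free. -/
def Bifree (A : BisetAction G H X) : Prop := A.LeftFree ∧ A.RightFree

/-- The fixed-point set `X^{(P,φ)} = {x | x·u = φ(u)·x for all u ∈ P}`. -/
def Fix (A : BisetAction G H X) (P : Subgroup G) (φ : P →* H) : Set X :=
  {x | ∀ u : P, A.rmul x u = A.smul (φ u) x}

/-- The opposite biset: same underlying set, with the two actions reversed
(`g·x·h` in `op A` is `h⁻¹·x·g⁻¹` in `A`). -/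
def op (A : BisetAction G H X) : BisetAction H G X where
  smul g x := A.rmul x g⁻¹
  rmul x h := A.smul h⁻¹ x
  one_smul x := by simpa using A.rmul_one x
  mul_smul g₁ g₂ x := by rw [mul_inv_rev, A.rmul_mul]
  rmul_one x := by simpa using A.one_smul x
  rmul_mul x h₁ h₂ := by rw [mul_inv_rev, A.mul_smul]
  smul_rmul g x h := (A.smul_rmul h⁻¹ x g⁻¹).symm

/-- The setoid of left `H`-orbits. -/
def leftOrbitSetoid (A : BisetAction G H X) : Setoid X where
  r x y := ∃ h : H, y = A.smul h x
  iseqv := by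
    refine ⟨fun x => ⟨1, (A.one_smul x).symm⟩, ?_, ?_⟩
    · rintro x y ⟨h, rfl⟩
      exact ⟨h⁻¹, by rw [A.smul_smul, inv_mul_cancel, A.one_smul]⟩
    · rintro x y z ⟨h₁, rfl⟩ ⟨h₂, rfl⟩
      exact ⟨h₂ * h₁, A.smul_smul h₂ h₁ x⟩

/-- The set of left `H`-orbits of the biset. -/
def leftOrbits (A : BisetAction G H X) : Type _ := Quotient (A.leftOrbitSetoid)

/-- Restricting the right action along a homomorphism `φ : P →* G`. -/
def restrictRight (A : BisetAction G H X) {P : Type*} [Group P] (φ : P →* G) :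
    BisetAction P H X where
  smul := A.smul
  rmul x u := A.rmul x (φ u)
  one_smul := A.one_smul
  mul_smul := A.mul_smul
  rmul_one x := by rw [map_one, A.rmul_one]
  rmul_mul x u₁ u₂ := by rw [map_mul, A.rmul_mul]
  smul_rmul h x u := A.smul_rmul h x (φ u)

/-- Restricting the left action along a homomorphism `φ : P →* H`. -/
def restrictLeft (A : BisetAction G H X) {P : Type*} [Group P] (φ : P →* H) :
    BisetAction G P X where
  smul u x := A.smul (φ u) x
  rmul := A.rmul
  one_smul x := by rw [map_one, A.one_smul]
  mul_smul u₁ u₂ x := by rw [map_mul, A.mul_smul]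
  rmul_one := A.rmul_one
  rmul_mul := A.rmul_mul
  smul_rmul u x g := A.smul_rmul (φ u) x g

end BisetAction

/-- An isomorphism of `(G,H)`-bisets: an equivalence of underlying sets commuting with
both actions. -/
structure BisetIso {G H : Type*} [Group G] [Group H] {X Y : Type*}
    (A : BisetAction G H X) (B : BisetAction G H Y) extends X ≃ Y where
  map_smul : ∀ (h : H) (x : X), toEquiv (A.smul h x) = B.smul h (toEquiv x)
  map_rmul : ∀ (x : X) (g : G), toEquiv (A.rmul x g) = B.rmul (toEquiv x) g

/-! ## Collections of morphisms between subgroups -/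

section Collections

variable {S : Type*} [Group S]

/-- The conjugation homomorphism `P →* S`, `u ↦ s * u * s⁻¹`. -/
def conjHom (s : S) (P : Subgroup S) : P →* S :=
  (MulAut.conj s).toMonoidHom.comp P.subtype

/-- A "collection" of morphism sets on the poset of subgroups of `S`:
for each pair of subgroups `P Q ≤ S` a set of group homomorphisms `P →* S`
(to be thought of as morphisms from `P` to `Q`, i.e. maps landing in `Q`). -/
abbrev Collection (S : Type*) [Group S] :=
  ∀ (P : Subgroup S), Subgroup S → Set (P →* S)

namespace Collection

/-- `P` and `Q` are conjugate in the collection `C` if some morphism of `C`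
restricts to an isomorphism from `P` onto `Q`. -/
def IsConj (C : Collection S) (P Q : Subgroup S) : Prop :=
  ∃ φ ∈ C P Q, MonoidHom.range φ = Q

/-- `P` is fully centralized: its centralizer has maximal order in its conjugacy class. -/
def FullyCentralized (C : Collection S) (P : Subgroup S) : Prop :=
  ∀ Q : Subgroup S, C.IsConj P Q →
    Nat.card (Subgroup.centralizer (Q : Set S)) ≤ Nat.card (Subgroup.centralizer (P : Set S))

/-- `P` is fully normalized: its normalizer has maximal order in its conjugacy class. -/
def FullyNormalized (C : Collection S) (P : Subgroup S) : Prop :=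
  ∀ Q : Subgroup S, C.IsConj P Q → Nat.card (Subgroup.normalizer (Q : Set S)) ≤ Nat.card (Subgroup.normalizer (P : Set S))

end Collection

/-- The set `Aut_S(P)` of automorphisms of `P` induced by conjugation by elements of the
normalizer `N_S(P)`, as a set of homomorphisms `P →* S`. -/
def autSSet (P : Subgroup S) : Set (P →* S) :=
  {φ | ∃ s ∈ Subgroup.normalizer (P : Set S), φ = conjHom s P}

/-- `Aut_S(P)` is a Sylow `p`-subgroup of `Aut_C(P) = C P P`:  `Aut_S(P)` is contained
in `Aut_C(P)`, has `p`-power order, and has index prime to `p` in `Aut_C(P)`. -/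
def Collection.AutSIsSylow (p : ℕ) (C : Collection S) (P : Subgroup S) : Prop :=
  autSSet P ⊆ C P P ∧ (∃ n : ℕ, Nat.card (autSSet P) = p ^ n) ∧
    ∃ k : ℕ, ¬ p ∣ k ∧ Nat.card (C P P) = k * Nat.card (autSSet P)

/-- A collection is level-wise closed if it contains all conjugation maps induced by `S`,
the inverse of every isomorphism it contains, and all composites of composable
isomorphisms it contains. -/
def LevelwiseClosed (C : Collection S) : Prop :=
  (∀ (P Q : Subgroup S) (s : S), (∀ u ∈ P, s * u * s⁻¹ ∈ Q) → conjHom s P ∈ C P Q) ∧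
  (∀ (P Q : Subgroup S), ∀ φ ∈ C P Q, MonoidHom.range φ = Q → ∀ ψ : Q →* S,
    (∀ (u : P) (hq : (φ u : S) ∈ Q), ψ ⟨φ u, hq⟩ = u) → ψ ∈ C Q P) ∧
  (∀ (P Q R : Subgroup S) (φ : P →* S), φ ∈ C P Q → ∀ ψ : Q →* S, ψ ∈ C Q R →
    ∀ hφ : MonoidHom.range φ = Q, MonoidHom.range ψ = R →
    ψ.comp (φ.codRestrict Q (fun u => hφ ▸ show φ u ∈ φ.range from ⟨u, rfl⟩)) ∈ C P R)

end Collections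

/-! ## The fixed-point pre-fusion system of a biset -/

/-- The pre-fusion collection `Pre-Fix(X)`: morphisms from `P` to `Q` are the injective
homomorphisms `φ : P → Q` with nonempty fixed-point set `X^{(P,φ)}`. -/
def preFixHom {S X : Type*} [Group S] (A : BisetAction S S X) : Collection S :=
  fun P Q => {φ | Function.Injective φ ∧ (∀ u : P, φ u ∈ Q) ∧ (A.Fix P φ).Nonempty}



section Counting

variable {α β : Type*}

def subSubEquiv (s : Set α) (q : α → Prop) : {w : ↥s // q w.1} ≃ ↥{x | x ∈ s ∧ q x} :=
  ⟨fun w => ⟨w.1.1, w.1.2, w.2⟩, fun x => ⟨⟨x.1, x.2.1⟩, x.2.2⟩, fun _ => rfl, fun _ => rfl⟩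

lemma card_eq_of_injections [Finite α] [Finite β] (f : α → β) (hf : Function.Injective f)
    (g : β → α) (hg : Function.Injective g) : Nat.card α = Nat.card β :=
  le_antisymm (Nat.card_le_card_of_injective f hf) (Nat.card_le_card_of_injective g hg)

lemma card_eq_sum_fibers [Finite α] [Fintype β] (f : α → β) :
    Nat.card α = ∑ b : β, Nat.card {a // f a = b} := by
  haveI := Fintype.ofFinite α
  classical
  rw [Nat.card_eq_fintype_card, ← Fintype.card_congr (Equiv.sigmaFiberEquiv f),
    Fintype.card_sigma]
  exact Finset.sum_congr rfl fun b _ => (Nat.card_eq_fintype_card).symm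

/-- if all fibers lie over `T` and have constant size `c`, total is `|T| * c` -/
lemma card_of_const_fibers [Finite α] [Finite β] (f : α → β) (T : Set β) (c : ℕ)
    (hT : ∀ a, f a ∈ T) (hfib : ∀ b ∈ T, Nat.card {a // f a = b} = c) :
    Nat.card α = Nat.card T * c := by
  haveI := Fintype.ofFinite β
  classical
  rw [card_eq_sum_fibers f]
  rw [← Finset.sum_subset (Finset.subset_univ T.toFinset)
    (fun b _ hb => by
      have hbT : b ∉ T := by simpa using hb
      have : IsEmpty {a // f a = b} := ⟨fun a => hbT (a.2 ▸ hT a.1)⟩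
      exact Nat.card_of_isEmpty)]
  rw [Finset.sum_congr rfl fun b hb => hfib b (by simpa using hb), Finset.sum_const,
    smul_eq_mul]
  congr 1
  rw [Nat.card_coe_set_eq, Set.ncard_eq_toFinset_card']

/-- extraction of a fiber with size formula, from non-divisibility of the total. -/
lemma exists_fiber_not_dvd [Finite α] [Finite β] (f : α → β) (n : β → ℕ) {p m s : ℕ}
    (hs : s ≠ 0) (hcard : Nat.card α = m * s)
    (hfib : ∀ b, Nat.card {a // f a = b} = n b * s) (hm : ¬ p ∣ m) :
    ∃ b, ¬ p ∣ n b := by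
  haveI := Fintype.ofFinite β
  by_contra h
  push_neg at h
  apply hm
  have hsum : Nat.card α = (∑ b : β, n b) * s := by
    rw [card_eq_sum_fibers f, Finset.sum_mul]
    exact Finset.sum_congr rfl fun b _ => hfib b
  have hm2 : m = ∑ b : β, n b :=
    (Nat.eq_of_mul_eq_mul_right (Nat.pos_of_ne_zero hs) (hsum.symm.trans hcard)).symm
  rw [hm2]
  exact Finset.dvd_sum fun b _ => h b

end Counting

section Valuation

lemma pow_divisor_compare {p c d e : ℕ} (hp : p.Prime) (hd : d ∣ c) (he : e ∣ c)
    (hdp : ∃ a, d = p ^ a) (hep : ∃ b, e = p ^ b) (h : ¬ p ∣ c / e) :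
    (¬ p ∣ c / d ↔ e ≤ d) := by
  obtain ⟨a, rfl⟩ := hdp
  obtain ⟨b, rfl⟩ := hep
  obtain ⟨m, rfl⟩ := he
  have hm : ¬ p ∣ m := by
    rwa [Nat.mul_div_cancel_left _ (pow_pos hp.pos b)] at h
  have hab : a ≤ b := by
    have h2 : p ^ a ∣ p ^ b :=
      (Nat.Coprime.dvd_of_dvd_mul_right (Nat.Coprime.pow_left _
        ((Nat.Prime.coprime_iff_not_dvd hp).2 hm)) hd)
    exact (Nat.pow_dvd_pow_iff_le_right hp.one_lt).1 h2
  have hc2 : p ^ b * m = p ^ a * (p ^ (b - a) * m) := by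
    rw [← mul_assoc, ← pow_add]
    congr 2
    omega
  rw [hc2, Nat.mul_div_cancel_left _ (pow_pos hp.pos a)]
  constructor
  · intro hnd
    have hba : b - a = 0 := by
      by_contra hba
      exact hnd (dvd_mul_of_dvd_left (dvd_pow_self p hba) m)
    exact Nat.pow_le_pow_right hp.pos (by omega)
  · intro hle
    have hba : b ≤ a := (Nat.pow_le_pow_iff_right hp.one_lt).1 hle
    have h0 : b - a = 0 := by omega
    rw [h0, pow_zero, one_mul]
    exact hm

end Valuation

lemma pow_divisor_le {p c d e : ℕ} (hp : p.Prime) (hd : d ∣ c) (he : e ∣ c)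
    (hdp : ∃ a, d = p ^ a) (hep : ∃ b, e = p ^ b) (h : ¬ p ∣ c / e) : d ≤ e := by
  obtain ⟨a, rfl⟩ := hdp
  obtain ⟨b, rfl⟩ := hep
  obtain ⟨m, rfl⟩ := he
  have hm : ¬ p ∣ m := by
    rwa [Nat.mul_div_cancel_left _ (pow_pos hp.pos b)] at h
  have h2 : p ^ a ∣ p ^ b :=
    (Nat.Coprime.dvd_of_dvd_mul_right (Nat.Coprime.pow_left _
      ((Nat.Prime.coprime_iff_not_dvd hp).2 hm)) hd)
  exact Nat.pow_le_pow_right hp.pos ((Nat.pow_dvd_pow_iff_le_right hp.one_lt).1 h2)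


section BisetAux

open BisetAction

variable {S X : Type*} [Group S]

/-- composition with conjugation -/
def conjComp {P : Subgroup S} (s : S) (ψ : P →* S) : P →* S :=
  (MulAut.conj s).toMonoidHom.comp ψ

@[simp] lemma conjComp_apply {P : Subgroup S} (s : S) (ψ : P →* S) (u : P) :
    conjComp s ψ u = s * ψ u * s⁻¹ := rfl

lemma conjComp_conjComp {P : Subgroup S} (s t : S) (ψ : P →* S) :
    conjComp s (conjComp t ψ) = conjComp (s * t) ψ := by
  ext u; simp [conjComp, mul_assoc]

lemma conjComp_one {P : Subgroup S} (ψ : P →* S) : conjComp 1 ψ = ψ := by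
  ext u; simp [conjComp]

lemma range_conjComp {P : Subgroup S} (s : S) (ψ : P →* S) :
    (conjComp s ψ).range = ψ.range.map (MulAut.conj s).toMonoidHom :=
  MonoidHom.range_comp _ _

lemma conj_hom_comp (s t : S) :
    ((MulAut.conj s).toMonoidHom.comp (MulAut.conj t).toMonoidHom : S →* S) =
      (MulAut.conj (s * t)).toMonoidHom := by
  ext g
  simp [mul_assoc]

lemma conj_hom_one : ((MulAut.conj (1 : S)).toMonoidHom : S →* S) = MonoidHom.id S := by
  ext g
  simp

variable (A : BisetAction S S X) {P : Subgroup S}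

lemma fix_smul_mem (s : S) {ψ : P →* S} {x : X} (hx : x ∈ A.Fix P ψ) :
    A.smul s x ∈ A.Fix P (conjComp s ψ) := by
  intro u
  show A.rmul (A.smul s x) u = A.smul _ (A.smul s x)
  rw [A.smul_rmul, hx u, A.smul_smul, A.smul_smul, conjComp_apply]
  congr 1
  group

lemma fix_injective (hA : A.Bifree) {ψ : P →* S} {x : X} (hx : x ∈ A.Fix P ψ) :
    Function.Injective ψ := by
  rw [injective_iff_map_eq_one]
  intro u hu
  have h := hx u
  rw [hu, A.one_smul] at h
  exact Subtype.ext (hA.2 u x h)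

lemma fix_unique (hA : A.Bifree) {ψ₁ ψ₂ : P →* S} {x : X} (h1 : x ∈ A.Fix P ψ₁)
    (h2 : x ∈ A.Fix P ψ₂) : ψ₁ = ψ₂ := by
  ext u
  have h := (h1 u).symm.trans (h2 u)
  have h3 : A.smul ((ψ₂ u)⁻¹ * ψ₁ u) x = x := by
    rw [A.mul_smul, h, A.smul_smul, inv_mul_cancel, A.one_smul]
  exact (inv_mul_eq_one.mp (hA.1 _ _ h3)).symm

lemma mem_preFix_top (hA : A.Bifree) {ψ : P →* S} (h : (A.Fix P ψ).Nonempty) :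
    ψ ∈ preFixHom A P ⊤ := by
  obtain ⟨x, hx⟩ := h
  exact ⟨fix_injective A hA hx, fun u => Subgroup.mem_top _, ⟨x, hx⟩⟩

lemma exists_fix_of_orbit (hA : A.Bifree) {x : X}
    (h : ∀ u : P, ∃ g : S, A.rmul x u = A.smul g x) : ∃ ψ : P →* S, x ∈ A.Fix P ψ := by
  choose g hg using h
  have huniq : ∀ (a b : S), A.smul a x = A.smul b x → a = b := by
    intro a b hab
    have h4 : A.smul (b⁻¹ * a) x = x := by
      rw [A.mul_smul, hab, A.smul_smul, inv_mul_cancel, A.one_smul]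
    exact (inv_mul_eq_one.mp (hA.1 _ _ h4)).symm
  refine ⟨{ toFun := g, map_one' := ?_, map_mul' := ?_ }, fun u => hg u⟩
  · apply huniq
    rw [← hg 1, OneMemClass.coe_one, A.rmul_one, A.one_smul]
  · intro u v
    apply huniq
    rw [← hg (u * v), Subgroup.coe_mul, A.rmul_mul, hg u, A.smul_rmul, hg v,
      A.smul_smul]

open Classical in
noncomputable def phiFun (A : BisetAction S S X) (P : Subgroup S) (x : X) : P →* S :=
  if h : ∃ ψ : P →* S, x ∈ A.Fix P ψ then h.choose else 1

lemma phiFun_eq (hA : A.Bifree) {x : X} {ψ : P →* S} (hx : x ∈ A.Fix P ψ) :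
    phiFun A P x = ψ := by
  have h : ∃ ψ' : P →* S, x ∈ A.Fix P ψ' := ⟨ψ, hx⟩
  simp only [phiFun, dif_pos h]
  exact fix_unique A hA h.choose_spec hx

lemma mem_fix_phiFun {x : X} (h : ∃ ψ : P →* S, x ∈ A.Fix P ψ) :
    x ∈ A.Fix P (phiFun A P x) := by
  simp only [phiFun, dif_pos h]
  exact h.choose_spec

lemma orbit_fix_transfer {x y : X} (hA : A.Bifree) (hxy : A.leftOrbitSetoid.r x y)
    (hx : ∀ u : P, ∃ g : S, A.rmul x u = A.smul g x) :
    ∀ u : P, ∃ g : S, A.rmul y u = A.smul g y := by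
  obtain ⟨h, rfl⟩ := hxy
  intro u
  obtain ⟨g, hg⟩ := hx u
  refine ⟨h * g * h⁻¹, ?_⟩
  rw [A.smul_rmul, hg, A.smul_smul, A.smul_smul]
  congr 1
  group

end BisetAux


section OrbitCounting

open BisetAction

variable {S X : Type*} [Group S] (A : BisetAction S S X)

lemma mk_smul (s : S) (x : X) :
    Quotient.mk A.leftOrbitSetoid (A.smul s x) = Quotient.mk A.leftOrbitSetoid x :=
  (Quotient.sound (show A.leftOrbitSetoid.r x (A.smul s x) from ⟨s, rfl⟩)).symm

lemma card_invariant_set [Finite S] [Finite X] (hA : A.Bifree) (W : Set X)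
    (hW : ∀ (s : S), ∀ x ∈ W, A.smul s x ∈ W) :
    Nat.card W =
      Nat.card (Quotient.mk A.leftOrbitSetoid '' W : Set A.leftOrbits) * Nat.card S := by
  haveI : Finite A.leftOrbits := Quotient.finite _
  have key : ∀ o : ↥(Quotient.mk A.leftOrbitSetoid '' W : Set A.leftOrbits),
      (o : A.leftOrbits).out ∈ W := by
    rintro ⟨o, ho⟩
    obtain ⟨w, hw, hmk⟩ := ho
    have h2 : Quotient.mk A.leftOrbitSetoid w = Quotient.mk A.leftOrbitSetoid o.out := by
      rw [hmk]
      exact (Quotient.out_eq o).symm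
    obtain ⟨h, hh⟩ := Quotient.exact h2
    rw [hh]
    exact hW h w hw
  have hbij : Function.Bijective
      (fun os : ↥(Quotient.mk A.leftOrbitSetoid '' W : Set A.leftOrbits) × S =>
        (⟨A.smul os.2 os.1.1.out, hW os.2 _ (key os.1)⟩ : ↥W)) := by
    constructor
    · rintro ⟨o, s⟩ ⟨o', s'⟩ hos
      have heq : A.smul s (o : A.leftOrbits).out = A.smul s' (o' : A.leftOrbits).out :=
        congrArg Subtype.val hos
      have ho : (o : A.leftOrbits) = (o' : A.leftOrbits) := by
        have h5 := congrArg (Quotient.mk A.leftOrbitSetoid) heq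
        rw [mk_smul, mk_smul] at h5
        rw [← Quotient.out_eq (o : A.leftOrbits), ← Quotient.out_eq (o' : A.leftOrbits), h5]
      have ho2 : o = o' := Subtype.ext ho
      subst ho2
      have hout : (o : A.leftOrbits).out = (o : A.leftOrbits).out := rfl
      have hs : s = s' := by
        have h4 : A.smul (s'⁻¹ * s) (o : A.leftOrbits).out = (o : A.leftOrbits).out := by
          rw [A.mul_smul, heq, A.smul_smul, inv_mul_cancel, A.one_smul]
        exact (inv_mul_eq_one.mp (hA.1 _ _ h4)).symm
      rw [hs]
    · rintro ⟨w, hw⟩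
      have h2 : Quotient.mk A.leftOrbitSetoid (Quotient.mk A.leftOrbitSetoid w).out
          = Quotient.mk A.leftOrbitSetoid w := Quotient.out_eq _
      obtain ⟨h, hh⟩ := Quotient.exact h2
      exact ⟨(⟨⟨Quotient.mk A.leftOrbitSetoid w, ⟨w, hw, rfl⟩⟩, h⟩), Subtype.ext hh.symm⟩
  rw [← Nat.card_eq_of_bijective _ hbij, Nat.card_prod]

end OrbitCounting


section FixedOrbits

open BisetAction MulAction

variable {p : ℕ} {S X : Type*} [Group S] [Finite S] [Finite X] (A : BisetAction S S X)
  (P : Subgroup S)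

/-- the orbit consists of points whose `P`-translates stay in the orbit -/
def fixedPred (o : A.leftOrbits) : Prop :=
  ∀ x : X, Quotient.mk A.leftOrbitSetoid x = o → ∀ u : P, ∃ g : S, A.rmul x u = A.smul g x

lemma fixedPred_of_rep (hA : A.Bifree) {x : X}
    (hx : ∀ u : P, ∃ g : S, A.rmul x u = A.smul g x) :
    fixedPred A P (Quotient.mk A.leftOrbitSetoid x) := fun y hy u =>
  orbit_fix_transfer A hA (Quotient.exact hy.symm) hx u

lemma card_X_eq (hA : A.Bifree) : Nat.card X = Nat.card A.leftOrbits * Nat.card S := by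
  have h := card_invariant_set A hA Set.univ (fun s x _ => trivial)
  rw [show (Quotient.mk A.leftOrbitSetoid '' Set.univ : Set A.leftOrbits) =
      Set.range (Quotient.mk A.leftOrbitSetoid) from Set.image_univ] at h
  have h2 : Set.range (Quotient.mk A.leftOrbitSetoid) = Set.univ :=
    Set.range_eq_univ.mpr (fun o => ⟨o.out, Quotient.out_eq o⟩)
  rw [h2] at h
  rw [← Nat.card_congr (Equiv.Set.univ X), h]
  exact congrArg (· * Nat.card S) (Nat.card_congr (Equiv.Set.univ (Quotient A.leftOrbitSetoid)))

lemma card_modEq_fixedPred (hp : p.Prime) (hS : IsPGroup p S) (hA : A.Bifree) :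
    Nat.card A.leftOrbits ≡ Nat.card {o : A.leftOrbits // fixedPred A P o} [MOD p] := by
  haveI : Finite A.leftOrbits := Quotient.finite _
  letI : SMul P A.leftOrbits :=
    ⟨fun u o => Quotient.lift (fun x => Quotient.mk A.leftOrbitSetoid (A.rmul x ((u : S))⁻¹))
      (fun a b hab => by
        obtain ⟨h, rfl⟩ := hab
        show Quotient.mk A.leftOrbitSetoid (A.rmul a ((u : S))⁻¹) =
          Quotient.mk A.leftOrbitSetoid (A.rmul (A.smul h a) ((u : S))⁻¹)
        rw [A.smul_rmul, mk_smul]) o⟩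
  letI : MulAction P A.leftOrbits :=
    { one_smul := fun o => by
        induction o using Quotient.ind with
        | _ x =>
          show Quotient.mk A.leftOrbitSetoid (A.rmul x (((1 : P) : S))⁻¹) = _
          rw [OneMemClass.coe_one, inv_one, A.rmul_one]
      mul_smul := fun u v o => by
        induction o using Quotient.ind with
        | _ x =>
          show Quotient.mk A.leftOrbitSetoid (A.rmul x (((u * v : P) : S))⁻¹) =
            Quotient.mk A.leftOrbitSetoid (A.rmul (A.rmul x ((v : S))⁻¹) ((u : S))⁻¹)
          rw [Subgroup.coe_mul, mul_inv_rev, A.rmul_mul] }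
  haveI := Fact.mk hp
  have hcong := (hS.to_subgroup P).card_modEq_card_fixedPoints A.leftOrbits
  have hsets : Nat.card (fixedPoints P A.leftOrbits) =
      Nat.card {o : A.leftOrbits // fixedPred A P o} := by
    apply Nat.card_congr
    apply Equiv.subtypeEquivRight
    intro o
    induction o using Quotient.ind with
    | _ x =>
      constructor
      · intro h
        apply fixedPred_of_rep A P hA
        intro u
        have h4 := h u⁻¹
        have h5 : Quotient.mk A.leftOrbitSetoid (A.rmul x (u : S)) =
            Quotient.mk A.leftOrbitSetoid x := by
          have : ((u⁻¹ : P) : S)⁻¹ = (u : S) := by simp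
          rw [← this]
          exact h4
        obtain ⟨g, hg⟩ := Quotient.exact h5
        have h7 : A.smul g⁻¹ x = A.rmul x (u : S) := by
          conv_lhs => rw [hg]
          rw [A.smul_smul, inv_mul_cancel, A.one_smul]
        exact ⟨g⁻¹, h7.symm⟩
      · intro h u
        obtain ⟨g, hg⟩ := h x rfl u⁻¹
        show Quotient.mk A.leftOrbitSetoid (A.rmul x ((u : S))⁻¹) = _
        have h6 : A.rmul x ((u : S))⁻¹ = A.smul g x := by
          rw [← hg]
          norm_cast
        rw [h6, mk_smul]
  exact hsets ▸ hcong

end FixedOrbits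


section OrbitStabilizer

variable {S : Type*} [Group S] [Finite S]

instance finiteHom (P : Subgroup S) : Finite (P →* S) :=
  Finite.of_injective _ DFunLike.coe_injective

lemma card_conjClass_hom (P : Subgroup S) (ψ : P →* S) :
    Nat.card {φ : P →* S // ∃ s : S, φ = conjComp s ψ} *
      Nat.card (Subgroup.centralizer (ψ.range : Set S)) = Nat.card S := by
  letI : SMul S (P →* S) := ⟨conjComp⟩
  letI : MulAction S (P →* S) :=
    { one_smul := conjComp_one
      mul_smul := fun s t φ => (conjComp_conjComp s t φ).symm }
  haveI := Fintype.ofFinite S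
  haveI := Fintype.ofFinite (P →* S)
  classical
  have horb := MulAction.card_orbit_mul_card_stabilizer_eq_card_group S ψ
  have hstab : MulAction.stabilizer S ψ = Subgroup.centralizer (ψ.range : Set S) := by
    ext s
    rw [MulAction.mem_stabilizer_iff, Subgroup.mem_centralizer_iff]
    constructor
    · rintro h g ⟨u, rfl⟩
      have h2 : s * ψ u * s⁻¹ = ψ u := DFunLike.congr_fun h u
      exact (mul_inv_eq_iff_eq_mul.mp h2).symm
    · intro h
      ext u
      show s * ψ u * s⁻¹ = ψ u
      have h2 := h (ψ u) ⟨u, rfl⟩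
      rw [← h2, mul_inv_cancel_right]
  have horbeq : Nat.card (MulAction.orbit S ψ) =
      Nat.card {φ : P →* S // ∃ s : S, φ = conjComp s ψ} := by
    apply Nat.card_congr
    apply Equiv.subtypeEquivRight
    intro φ
    exact exists_congr fun s => eq_comm
  calc Nat.card {φ : P →* S // ∃ s : S, φ = conjComp s ψ} *
        Nat.card (Subgroup.centralizer (ψ.range : Set S))
      = Nat.card (MulAction.orbit S ψ) * Nat.card (MulAction.stabilizer S ψ) := by
        rw [horbeq, hstab]
    _ = Nat.card S := by
        rw [Nat.card_eq_fintype_card (α := S), ← horb]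
        congr 1 <;> exact Nat.card_eq_fintype_card

lemma card_conjClass_subgroup (Q : Subgroup S) :
    Nat.card {R : Subgroup S // ∃ s : S, R = Q.map (MulAut.conj s).toMonoidHom} *
      Nat.card (Subgroup.normalizer (Q : Set S)) = Nat.card S := by
  letI : SMul S (Subgroup S) := ⟨fun s R => R.map (MulAut.conj s).toMonoidHom⟩
  letI : MulAction S (Subgroup S) :=
    { one_smul := fun R => by
        show R.map (MulAut.conj (1 : S)).toMonoidHom = R
        rw [conj_hom_one]
        exact Subgroup.map_id R
      mul_smul := fun s t R => by
        show R.map (MulAut.conj (s * t)).toMonoidHom =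
          (R.map (MulAut.conj t).toMonoidHom).map (MulAut.conj s).toMonoidHom
        rw [Subgroup.map_map, conj_hom_comp] }
  haveI := Fintype.ofFinite S
  haveI := Fintype.ofFinite (Subgroup S)
  classical
  have horb := MulAction.card_orbit_mul_card_stabilizer_eq_card_group S Q
  have hstab : MulAction.stabilizer S Q = Subgroup.normalizer (Q : Set S) := by
    ext s
    rw [MulAction.mem_stabilizer_iff, Subgroup.mem_normalizer_iff]
    constructor
    · intro hmap h
      constructor
      · intro hq
        rw [← hmap]
        exact ⟨h, hq, rfl⟩
      · intro hq'
        rw [← hmap] at hq'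
        obtain ⟨r, hr, hrs⟩ := hq'
        have : r = h := by
          have h3 : s * r * s⁻¹ = s * h * s⁻¹ := hrs
          have := mul_left_cancel (mul_right_cancel h3)
          exact this
        exact this ▸ hr
    · intro hn
      ext x
      constructor
      · rintro ⟨q, hq, rfl⟩
        exact (hn q).1 hq
      · intro hx
        refine ⟨s⁻¹ * x * s, ?_, by show s * (s⁻¹ * x * s) * s⁻¹ = x; group⟩
        apply (hn (s⁻¹ * x * s)).2
        have h4 : s * (s⁻¹ * x * s) * s⁻¹ = x := by group
        rw [h4]
        exact hx
  have horbeq : Nat.card (MulAction.orbit S Q) =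
      Nat.card {R : Subgroup S // ∃ s : S, R = Q.map (MulAut.conj s).toMonoidHom} := by
    apply Nat.card_congr
    apply Equiv.subtypeEquivRight
    intro R
    exact exists_congr fun s => eq_comm
  calc Nat.card {R : Subgroup S // ∃ s : S, R = Q.map (MulAut.conj s).toMonoidHom} *
        Nat.card (Subgroup.normalizer (Q : Set S))
      = Nat.card (MulAction.orbit S Q) * Nat.card (MulAction.stabilizer S Q) := by
        rw [horbeq, hstab]
    _ = Nat.card S := by
        rw [Nat.card_eq_fintype_card (α := S), ← horb]
        congr 1 <;> exact Nat.card_eq_fintype_card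

end OrbitStabilizer


section Closure

variable {S X : Type*} [Group S] (A : BisetAction S S X)

noncomputable def invHom {P : Subgroup S} (ψ : P →* S) (hinj : Function.Injective ψ) :
    ↥ψ.range →* S :=
  P.subtype.comp ((MonoidHom.ofInjective hinj).symm : ↥ψ.range ≃* P).toMonoidHom

lemma invHom_spec {P : Subgroup S} (ψ : P →* S) (hinj : Function.Injective ψ) (u : P)
    (hq : ψ u ∈ ψ.range) : invHom ψ hinj ⟨ψ u, hq⟩ = u := by
  have h : (MonoidHom.ofInjective hinj).symm ⟨ψ u, hq⟩ = u := by
    rw [MulEquiv.symm_apply_eq]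
    exact Subtype.ext (MonoidHom.ofInjective_apply hinj).symm
  show (P.subtype) ((MonoidHom.ofInjective hinj).symm ⟨ψ u, hq⟩) = ↑u
  rw [h]
  rfl

lemma invHom_mem_P {P : Subgroup S} (ψ : P →* S) (hinj : Function.Injective ψ)
    (q : ψ.range) : invHom ψ hinj q ∈ P :=
  SetLike.coe_mem _

lemma range_invHom {P : Subgroup S} (ψ : P →* S) (hinj : Function.Injective ψ) :
    (invHom ψ hinj).range = P := by
  apply le_antisymm
  · rintro x ⟨q, rfl⟩
    exact invHom_mem_P ψ hinj q
  · intro x hx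
    refine ⟨(MonoidHom.ofInjective hinj) ⟨x, hx⟩, ?_⟩
    show P.subtype ((MonoidHom.ofInjective hinj).symm ((MonoidHom.ofInjective hinj) ⟨x, hx⟩)) = x
    rw [MulEquiv.symm_apply_apply]
    rfl

def compHom {P Q : Subgroup S} (χ : Q →* S) (φ : P →* S) (h : ∀ u : P, φ u ∈ Q) :
    P →* S :=
  χ.comp (φ.codRestrict Q h)

@[simp] lemma compHom_apply {P Q : Subgroup S} (χ : Q →* S) (φ : P →* S)
    (h : ∀ u : P, φ u ∈ Q) (u : P) : compHom χ φ h u = χ ⟨φ u, h u⟩ := rfl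

lemma range_compHom {P Q : Subgroup S} (χ : Q →* S) (φ : P →* S) (h : ∀ u : P, φ u ∈ Q)
    (hrφ : φ.range = Q) : (compHom χ φ h).range = χ.range := by
  apply le_antisymm
  · rintro x ⟨u, rfl⟩
    exact ⟨⟨φ u, h u⟩, rfl⟩
  · rintro x ⟨⟨q, hq⟩, rfl⟩
    have hq' : q ∈ φ.range := hrφ ▸ hq
    obtain ⟨u, hu⟩ := hq'
    exact ⟨u, by rw [compHom_apply]; exact congrArg χ (Subtype.ext hu)⟩

variable {A}

lemma compHom_mem (hlw : LevelwiseClosed (preFixHom A)) {P Q R : Subgroup S} {φ : P →* S}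
    {χ : Q →* S} (hφ : φ ∈ preFixHom A P Q) (hχ : χ ∈ preFixHom A Q R)
    (hrφ : φ.range = Q) (hrχ : χ.range = R) : compHom χ φ hφ.2.1 ∈ preFixHom A P R :=
  hlw.2.2 P Q R φ hφ χ hχ hrφ hrχ

lemma invHom_mem (hlw : LevelwiseClosed (preFixHom A)) {P : Subgroup S} {ψ : P →* S}
    (hψ : ψ ∈ preFixHom A P ⊤) : invHom ψ hψ.1 ∈ preFixHom A ψ.range P :=
  hlw.2.1 P ψ.range ψ ⟨hψ.1, fun u => ⟨u, rfl⟩, hψ.2.2⟩ rfl _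
    (fun u hq => invHom_spec ψ hψ.1 u hq)

noncomputable def transHom {P : Subgroup S} (φ ψ : P →* S)
    (hinjφ : Function.Injective φ) : ↥φ.range →* S :=
  compHom ψ (invHom φ hinjφ) (fun q => invHom_mem_P φ hinjφ q)

lemma transHom_mem (hlw : LevelwiseClosed (preFixHom A)) {P : Subgroup S} {φ ψ : P →* S}
    (hφ : φ ∈ preFixHom A P ⊤) (hψ : ψ ∈ preFixHom A P ⊤) :
    transHom φ ψ hφ.1 ∈ preFixHom A φ.range ψ.range :=
  compHom_mem hlw (invHom_mem hlw hφ)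
    (⟨hψ.1, fun u => ⟨u, rfl⟩, hψ.2.2⟩ : ψ ∈ preFixHom A P ψ.range)
    (range_invHom φ hφ.1) rfl

lemma transHom_apply {P : Subgroup S} (φ ψ : P →* S) (hinjφ : Function.Injective φ)
    (u : P) (hq : φ u ∈ φ.range) : transHom φ ψ hinjφ ⟨φ u, hq⟩ = ψ u := by
  unfold transHom
  rw [compHom_apply]
  exact congrArg ψ (Subtype.ext (invHom_spec φ hinjφ u hq))

lemma range_transHom {P : Subgroup S} (φ ψ : P →* S) (hinjφ : Function.Injective φ) :
    (transHom φ ψ hinjφ).range = ψ.range :=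
  range_compHom ψ (invHom φ hinjφ) _ (range_invHom φ hinjφ)

end Closure

section Setoids

variable {S : Type*} [Group S]

def homSetoid (P : Subgroup S) : Setoid (P →* S) where
  r φ ψ := ∃ s : S, ψ = conjComp s φ
  iseqv := by
    refine ⟨fun φ => ⟨1, (conjComp_one φ).symm⟩, ?_, ?_⟩
    · rintro φ ψ ⟨s, rfl⟩
      exact ⟨s⁻¹, by rw [conjComp_conjComp, inv_mul_cancel, conjComp_one]⟩
    · rintro φ ψ χ ⟨s, rfl⟩ ⟨t, rfl⟩
      exact ⟨t * s, by rw [conjComp_conjComp]⟩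

def subSetoid (S : Type*) [Group S] : Setoid (Subgroup S) where
  r Q R := ∃ s : S, R = Q.map (MulAut.conj s).toMonoidHom
  iseqv := by
    refine ⟨fun Q => ⟨1, by rw [conj_hom_one]; exact (Subgroup.map_id Q).symm⟩, ?_, ?_⟩
    · rintro Q R ⟨s, rfl⟩
      exact ⟨s⁻¹, by
        rw [Subgroup.map_map, conj_hom_comp, inv_mul_cancel, conj_hom_one, Subgroup.map_id]⟩
    · rintro Q R T ⟨s, rfl⟩ ⟨t, rfl⟩
      exact ⟨t * s, by rw [Subgroup.map_map, conj_hom_comp]⟩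

end Setoids

/-- Let `S` be a finite `p`-group and `X` a finite bifree `(S,S)`-biset
with `|X|/|S|` prime to `p` such that `Pre-Fix(X)` is level-wise closed.  Fix `P ≤ S` and
assume all fixed-point sets `X^{(P,φ)}`, `φ ∈ Hom_{Pre-Fix(X)}(P,S)`, have the same
cardinality.  Then for every `φ ∈ Hom_{Pre-Fix(X)}(P,S)`:
(a) `φ(P)` is fully `Pre-Fix(X)`-centralized iff `p ∤ |X^{(P,φ)}|/|C_S(φ(P))|`, and
(b) `∑_{ψ ∈ Hom(P,φ(P))} |X^{(P,ψ)}| = |Aut(φ(P))|·|X^{(P,φ)}|`, and `φ(P)` is fully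
`Pre-Fix(X)`-normalized iff `p ∤ |Aut(φ(P))|·|X^{(P,φ)}| / |N_S(φ(P))|`. -/
theorem preFix_fullyCentralized_fullyNormalized_criteria
    (p : ℕ) (hp : p.Prime) (S : Type*) [Group S] [Finite S] (hS : IsPGroup p S)
    (X : Type*) [Finite X] (A : BisetAction S S X) (hA : A.Bifree)
    (hcard : ¬ p ∣ Nat.card X / Nat.card S)
    (hlw : LevelwiseClosed (preFixHom A))
    (P : Subgroup S)
    (hconst : ∀ φ ψ : P →* S, φ ∈ preFixHom A P ⊤ → ψ ∈ preFixHom A P ⊤ →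
      Nat.card (A.Fix P φ) = Nat.card (A.Fix P ψ)) :
    ∀ φ : P →* S, φ ∈ preFixHom A P ⊤ →
      ((preFixHom A).FullyCentralized (MonoidHom.range φ) ↔
        ¬ p ∣ Nat.card (A.Fix P φ) /
          Nat.card (Subgroup.centralizer ((MonoidHom.range φ : Subgroup S) : Set S))) ∧
      ((∑ᶠ ψ ∈ preFixHom A P (MonoidHom.range φ), Nat.card (A.Fix P ψ)) =
        Nat.card (preFixHom A (MonoidHom.range φ) (MonoidHom.range φ)) *
          Nat.card (A.Fix P φ)) ∧
      ((preFixHom A).FullyNormalized (MonoidHom.range φ) ↔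
        ¬ p ∣ (Nat.card (preFixHom A (MonoidHom.range φ) (MonoidHom.range φ)) *
            Nat.card (A.Fix P φ)) / Nat.card (Subgroup.normalizer ((MonoidHom.range φ : Subgroup S) : Set S))) := by
  intro φ hφ
  classical
  haveI := Fact.mk hp
  haveI : Finite A.leftOrbits := Quotient.finite _
  set Q := MonoidHom.range φ with hQ
  set c := Nat.card (A.Fix P φ) with hc
  have hSpos : Nat.card S ≠ 0 := Nat.card_pos.ne'
  have hc_all : ∀ ψ : P →* S, (A.Fix P ψ).Nonempty → Nat.card (A.Fix P ψ) = c :=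
    fun ψ h => hconst ψ φ (mem_preFix_top A hA h) hφ
  have hcpos : c ≠ 0 := by
    haveI : Nonempty (A.Fix P φ) := hφ.2.2.to_subtype
    exact Nat.card_pos.ne'
  have hsubpow : ∀ R : Subgroup S, ∃ a, Nat.card R = p ^ a :=
    fun R => IsPGroup.iff_card.mp (hS.to_subgroup R)
  have hsubpos : ∀ R : Subgroup S, Nat.card R ≠ 0 := fun R => Nat.card_pos.ne'
  -- the number of orbits is prime to `p`
  have hk : ¬ p ∣ Nat.card A.leftOrbits := by
    rw [card_X_eq A hA, Nat.mul_div_cancel _ (Nat.pos_of_ne_zero hSpos)] at hcard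
    exact hcard
  set N := Nat.card {o : A.leftOrbits // fixedPred A P o} with hNdef
  have hN : ¬ p ∣ N := by
    intro hdvd
    apply hk
    exact (Nat.modEq_zero_iff_dvd).mp
      ((card_modEq_fixedPred A P hp hS hA).trans ((Nat.modEq_zero_iff_dvd).mpr hdvd))
  -- the subset of `X` of points with `P`-stable orbits
  set Yset := {x : X | ∃ ψ : P →* S, x ∈ A.Fix P ψ} with hYdef
  have hYinv : ∀ (s : S), ∀ x ∈ Yset, A.smul s x ∈ Yset := by
    rintro s x ⟨ψ, hx⟩
    exact ⟨conjComp s ψ, fix_smul_mem A s hx⟩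
  have himg : (Quotient.mk A.leftOrbitSetoid '' Yset : Set A.leftOrbits) =
      {o | fixedPred A P o} := by
    ext o
    constructor
    · rintro ⟨x, ⟨ψ, hx⟩, rfl⟩
      exact fixedPred_of_rep A P hA (fun u => ⟨ψ u, hx u⟩)
    · intro ho
      exact ⟨o.out, exists_fix_of_orbit A hA (ho o.out (Quotient.out_eq o)),
        Quotient.out_eq o⟩
  have hYcard : Nat.card Yset = N * Nat.card S := by
    rw [card_invariant_set A hA Yset hYinv, himg]
    rfl
  -- membership facts
  have hweaken : ∀ {R : Subgroup S} {ψ : P →* S}, ψ ∈ preFixHom A P R →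
      ψ ∈ preFixHom A P ⊤ := fun h => ⟨h.1, fun u => Subgroup.mem_top _, h.2.2⟩
  have hintoQ : φ ∈ preFixHom A P Q := ⟨hφ.1, fun u => ⟨u, rfl⟩, hφ.2.2⟩
  have hrPQ : ∀ ψ' : P →* S, ψ' ∈ preFixHom A P Q → ψ'.range = Q := by
    intro ψ' hψ'
    apply Subgroup.eq_of_le_of_card_ge
    · rintro x ⟨u, rfl⟩
      exact hψ'.2.1 u
    · have h1 : Nat.card ψ'.range = Nat.card P :=
        (Nat.card_congr (MonoidHom.ofInjective hψ'.1).toEquiv).symm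
      have h2 : Nat.card Q = Nat.card P :=
        (Nat.card_congr (MonoidHom.ofInjective hφ.1).toEquiv).symm
      rw [h1, h2]
  have hrQQ : ∀ χ : Q →* S, χ ∈ preFixHom A Q Q → χ.range = Q := by
    intro χ hχ
    apply Subgroup.eq_of_le_of_card_ge
    · rintro x ⟨u, rfl⟩
      exact hχ.2.1 u
    · have h1 : Nat.card χ.range = Nat.card Q :=
        (Nat.card_congr (MonoidHom.ofInjective hχ.1).toEquiv).symm
      rw [h1]
  -- conjugacy correspondences
  have hrangeconj : ∀ ψ : P →* S, ψ ∈ preFixHom A P ⊤ →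
      (preFixHom A).IsConj Q ψ.range :=
    fun ψ hψ => ⟨transHom φ ψ hφ.1, transHom_mem hlw hφ hψ, range_transHom φ ψ hφ.1⟩
  have hconjrange : ∀ R : Subgroup S, (preFixHom A).IsConj Q R →
      ∃ ψ : P →* S, ψ ∈ preFixHom A P ⊤ ∧ ψ.range = R := by
    rintro R ⟨χ, hχ, hrχ⟩
    refine ⟨compHom χ φ (fun u => ⟨u, rfl⟩), ?_, ?_⟩
    · exact hweaken (compHom_mem hlw hintoQ hχ rfl hrχ)
    · exact (range_compHom χ φ _ rfl).trans hrχ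
  -- ### the class-counting machine for homomorphisms
  set J := Quotient (homSetoid P) with hJdef
  set fY : ↥Yset → J := fun w => Quotient.mk (homSetoid P) (phiFun A P w.1) with hfYdef
  have hfibY : ∀ ψ : P →* S, Nat.card {w : ↥Yset // fY w = Quotient.mk (homSetoid P) ψ} =
      Nat.card {x : X | ∃ s : S, x ∈ A.Fix P (conjComp s ψ)} := by
    intro ψ
    apply Nat.card_congr
    refine (subSubEquiv Yset
      (fun x => Quotient.mk (homSetoid P) (phiFun A P x) = Quotient.mk (homSetoid P) ψ)).trans
      (Equiv.setCongr ?_)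
    ext x
    simp only [Set.mem_setOf_eq]
    constructor
    · rintro ⟨hxY, hmk⟩
      obtain ⟨s, hs⟩ := Quotient.exact hmk
      have hfix : x ∈ A.Fix P (phiFun A P x) := mem_fix_phiFun A hxY
      refine ⟨s⁻¹, ?_⟩
      have heq : conjComp s⁻¹ ψ = phiFun A P x := by
        rw [hs, conjComp_conjComp, inv_mul_cancel, conjComp_one]
      rw [heq]
      exact hfix
    · rintro ⟨s, hx⟩
      refine ⟨⟨conjComp s ψ, hx⟩, ?_⟩
      rw [phiFun_eq A hA hx]
      exact Quotient.sound (show (homSetoid P).r (conjComp s ψ) ψ from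
        ⟨s⁻¹, by rw [conjComp_conjComp, inv_mul_cancel, conjComp_one]⟩)
  have hYcinv : ∀ ψ : P →* S, ∀ (s : S),
      ∀ x ∈ {x : X | ∃ t : S, x ∈ A.Fix P (conjComp t ψ)},
      A.smul s x ∈ {x : X | ∃ t : S, x ∈ A.Fix P (conjComp t ψ)} := by
    rintro ψ s x ⟨t, hx⟩
    refine ⟨s * t, ?_⟩
    have h1 := fix_smul_mem A s hx
    rwa [conjComp_conjComp] at h1
  have hdvdS : ∀ j : J, Nat.card S ∣ Nat.card {w : ↥Yset // fY w = j} := by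
    intro j
    induction j using Quotient.ind with
    | _ ψ =>
      rw [hfibY ψ, card_invariant_set A hA _ (hYcinv ψ)]
      exact dvd_mul_left _ _
  obtain ⟨j₀, hj₀⟩ := exists_fiber_not_dvd fY
    (fun j => Nat.card {w : ↥Yset // fY w = j} / Nat.card S) hSpos hYcard
    (fun j => (Nat.div_mul_cancel (hdvdS j)).symm) hN
  have hfne : Nat.card {w : ↥Yset // fY w = j₀} ≠ 0 := by
    intro h0
    apply hj₀
    rw [h0, Nat.zero_div]
    exact dvd_zero p
  obtain ⟨w₀, hw₀⟩ : ∃ w : ↥Yset, fY w = j₀ := by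
    by_contra hcon
    push_neg at hcon
    haveI : IsEmpty {w : ↥Yset // fY w = j₀} := ⟨fun z => hcon z.1 z.2⟩
    exact hfne Nat.card_of_isEmpty
  set ψ₁ := phiFun A P w₀.1 with hψ₁def
  have hψ₁fix : w₀.1 ∈ A.Fix P ψ₁ := mem_fix_phiFun A w₀.2
  have hψ₁ : ψ₁ ∈ preFixHom A P ⊤ := mem_preFix_top A hA ⟨w₀.1, hψ₁fix⟩
  have hj₀eq : j₀ = Quotient.mk (homSetoid P) ψ₁ := hw₀.symm
  -- master counting formula for realized homomorphisms
  have hmaster : ∀ ψ : P →* S, (A.Fix P ψ).Nonempty →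
      (Nat.card {w : ↥Yset // fY w = Quotient.mk (homSetoid P) ψ} / Nat.card S) *
        Nat.card (Subgroup.centralizer ((ψ.range : Subgroup S) : Set S)) = c := by
    intro ψ hne
    have h1 : Nat.card {x : X | ∃ s : S, x ∈ A.Fix P (conjComp s ψ)} =
        Nat.card {φ' : P →* S // ∃ s : S, φ' = conjComp s ψ} * c := by
      apply card_of_const_fibers (fun x => phiFun A P x.1)
        {φ' : P →* S | ∃ s : S, φ' = conjComp s ψ} c
      · rintro ⟨x, s, hx⟩
        exact ⟨s, (phiFun_eq A hA hx).symm ▸ rfl⟩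
      · rintro φ' ⟨s, rfl⟩
        have hequiv : {a : ↥{x : X | ∃ t : S, x ∈ A.Fix P (conjComp t ψ)} //
            phiFun A P a.1 = conjComp s ψ} ≃ ↥(A.Fix P (conjComp s ψ)) := by
          refine ⟨fun a => ⟨a.1.1, ?_⟩, fun x => ⟨⟨x.1, ⟨s, x.2⟩⟩, phiFun_eq A hA x.2⟩,
            fun a => ?_, fun x => rfl⟩
          · have := mem_fix_phiFun A (⟨_, a.1.2.choose_spec⟩ : ∃ ψ', a.1.1 ∈ A.Fix P ψ')
            rwa [a.2] at this
          · ext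
            rfl
        rw [Nat.card_congr hequiv]
        apply hc_all
        obtain ⟨x₀, hx₀⟩ := hne
        exact ⟨A.smul s x₀, fix_smul_mem A s hx₀⟩
    have h2 := card_conjClass_hom P ψ
    set F := Nat.card {w : ↥Yset // fY w = Quotient.mk (homSetoid P) ψ} with hF
    set CC := Nat.card (Subgroup.centralizer ((ψ.range : Subgroup S) : Set S)) with hCC
    have h3 : F * CC = Nat.card S * c := by
      rw [hfibY ψ] at hF
      rw [hF, h1, mul_right_comm, h2]
    have h4 : F / Nat.card S * Nat.card S = F := Nat.div_mul_cancel (hdvdS _)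
    apply Nat.eq_of_mul_eq_mul_right (Nat.pos_of_ne_zero hSpos)
    calc F / Nat.card S * CC * Nat.card S = F / Nat.card S * Nat.card S * CC := by ring
      _ = F * CC := by rw [h4]
      _ = Nat.card S * c := h3
      _ = c * Nat.card S := mul_comm _ _
  
  -- ### part (a)
  have hbase_fix : (A.Fix P ψ₁).Nonempty := ⟨w₀.1, hψ₁fix⟩
  have hCdvd : ∀ ψ : P →* S, (A.Fix P ψ).Nonempty →
      Nat.card (Subgroup.centralizer ((ψ.range : Subgroup S) : Set S)) ∣ c :=
    fun ψ h => ⟨_, by rw [← hmaster ψ h, mul_comm]⟩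
  have hbase : ¬ p ∣ c /
      Nat.card (Subgroup.centralizer ((ψ₁.range : Subgroup S) : Set S)) := by
    have hm := hmaster ψ₁ hbase_fix
    have hq : c / Nat.card (Subgroup.centralizer ((ψ₁.range : Subgroup S) : Set S)) =
        Nat.card {w : ↥Yset // fY w = Quotient.mk (homSetoid P) ψ₁} / Nat.card S := by
      rw [← hm, Nat.mul_div_cancel _ (Nat.pos_of_ne_zero (hsubpos _))]
    rw [hq, ← hj₀eq]
    exact hj₀
  have parta : (preFixHom A).FullyCentralized Q ↔
      ¬ p ∣ c / Nat.card (Subgroup.centralizer ((Q : Subgroup S) : Set S)) := by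
    constructor
    · intro hFC
      have hle := hFC ψ₁.range (hrangeconj ψ₁ hψ₁)
      exact (pow_divisor_compare hp (hCdvd φ hφ.2.2) (hCdvd ψ₁ hbase_fix)
        (hsubpow _) (hsubpow _) hbase).mpr hle
    · intro hnd R hconj
      obtain ⟨ψ', hψ', hr'⟩ := hconjrange R hconj
      rw [← hr']
      exact pow_divisor_le hp (hCdvd ψ' hψ'.2.2) (hCdvd φ hφ.2.2)
        (hsubpow _) (hsubpow _) hnd
  -- ### part (b1)
  have hcardPQ : Nat.card ↥(preFixHom A P Q) = Nat.card ↥(preFixHom A Q Q) := by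
    refine card_eq_of_injections
      (fun ψ' => ⟨transHom φ ψ'.1 hφ.1, by
        have h := transHom_mem hlw hφ (hweaken ψ'.2)
        rwa [hrPQ ψ'.1 ψ'.2] at h⟩)
      ?_
      (fun χ => ⟨compHom χ.1 φ (fun u => ⟨u, rfl⟩),
        compHom_mem hlw hintoQ χ.2 rfl (hrQQ χ.1 χ.2)⟩)
      ?_
    · intro ψ'₁ ψ'₂ heq
      apply Subtype.ext
      ext u
      have h1 := DFunLike.congr_fun (congrArg Subtype.val heq)
        (⟨φ u, ⟨u, rfl⟩⟩ : ↥φ.range)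
      exact (transHom_apply φ ψ'₁.1 hφ.1 u _).symm.trans (h1.trans (transHom_apply φ ψ'₂.1 hφ.1 u _))
    · intro χ₁ χ₂ heq
      apply Subtype.ext
      ext q
      obtain ⟨u, hu⟩ := MonoidHom.mem_range.mp q.2
      have h1 := DFunLike.congr_fun (congrArg Subtype.val heq) u
      change χ₁.1 ⟨φ u, _⟩ = χ₂.1 ⟨φ u, _⟩ at h1
      have hq' : q = ⟨φ u, ⟨u, rfl⟩⟩ := Subtype.ext hu.symm
      rw [hq']
      exact h1
  have hb1 : (∑ᶠ ψ ∈ preFixHom A P Q, Nat.card (A.Fix P ψ)) =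
      Nat.card ↥(preFixHom A Q Q) * c := by
    have hfin : (preFixHom A P Q).Finite := Set.toFinite _
    rw [finsum_mem_eq_finite_toFinset_sum _ hfin]
    have hval : ∀ ψ ∈ hfin.toFinset, Nat.card (A.Fix P ψ) = c := fun ψ hψ =>
      hc_all ψ ((hfin.mem_toFinset.mp hψ).2.2)
    rw [Finset.sum_congr rfl hval, Finset.sum_const, smul_eq_mul, ← hcardPQ]
    congr 1
    rw [Nat.card_coe_set_eq, Set.ncard_eq_toFinset_card _ hfin]
  -- ### part (b2)
  -- the `alpha` counting function and its invariance
  have hconjmap : ∀ (R : Subgroup S) (s : S) (ψ : P →* S), (A.Fix P ψ).Nonempty →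
      ψ.range = R → (A.Fix P (conjComp s ψ)).Nonempty ∧
        (conjComp s ψ).range = R.map (MulAut.conj s).toMonoidHom := by
    rintro R s ψ ⟨x, hx⟩ hr
    exact ⟨⟨A.smul s x, fix_smul_mem A s hx⟩, by rw [range_conjComp, hr]⟩
  have hmapinv : ∀ (R : Subgroup S) (s : S),
      (R.map (MulAut.conj s).toMonoidHom).map (MulAut.conj s⁻¹).toMonoidHom = R := by
    intro R s
    rw [Subgroup.map_map, conj_hom_comp, inv_mul_cancel, conj_hom_one, Subgroup.map_id]
  have hcCinj : ∀ (s : S), Function.Injective (fun ψ : P →* S => conjComp s ψ) := by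
    intro s ψ₁ ψ₂ h
    have h1 : conjComp s⁻¹ (conjComp s ψ₁) = conjComp s⁻¹ (conjComp s ψ₂) := congrArg _ h
    rwa [conjComp_conjComp, conjComp_conjComp, inv_mul_cancel, conjComp_one,
      conjComp_one] at h1
  have halphaS : ∀ (R : Subgroup S) (s : S),
      Nat.card {ψ : P →* S // (A.Fix P ψ).Nonempty ∧
        ψ.range = R.map (MulAut.conj s).toMonoidHom} =
      Nat.card {ψ : P →* S // (A.Fix P ψ).Nonempty ∧ ψ.range = R} := by
    intro R s
    refine card_eq_of_injections
      (fun ψ => ⟨conjComp s⁻¹ ψ.1, by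
        have h := hconjmap _ s⁻¹ ψ.1 ψ.2.1 ψ.2.2
        rw [hmapinv R s] at h
        exact h⟩)
      ?_
      (fun ψ => ⟨conjComp s ψ.1, hconjmap R s ψ.1 ψ.2.1 ψ.2.2⟩)
      ?_
    · intro a b h
      exact Subtype.ext (hcCinj s⁻¹ (congrArg Subtype.val h))
    · intro a b h
      exact Subtype.ext (hcCinj s (congrArg Subtype.val h))
  -- cardinality of the set of points with prescribed image subgroup
  have hYim : ∀ R' : Subgroup S,
      Nat.card ↥{x : X | ∃ ψ : P →* S, x ∈ A.Fix P ψ ∧ ψ.range = R'} =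
      Nat.card {ψ : P →* S // (A.Fix P ψ).Nonempty ∧ ψ.range = R'} * c := by
    intro R'
    apply card_of_const_fibers (fun x => phiFun A P x.1)
      {ψ : P →* S | (A.Fix P ψ).Nonempty ∧ ψ.range = R'} c
    · rintro ⟨x, ψ, hx, hr⟩
      rw [phiFun_eq A hA hx]
      exact ⟨⟨x, hx⟩, hr⟩
    · rintro ψ ⟨hne, hr⟩
      have hequiv : {a : ↥{x : X | ∃ ψ' : P →* S, x ∈ A.Fix P ψ' ∧ ψ'.range = R'} //
          phiFun A P a.1 = ψ} ≃ ↥(A.Fix P ψ) := by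
        refine ⟨fun a => ⟨a.1.1, ?_⟩,
          fun x => ⟨⟨x.1, ψ, x.2, hr⟩, phiFun_eq A hA x.2⟩,
          fun a => Subtype.ext (Subtype.ext rfl), fun x => Subtype.ext rfl⟩
        obtain ⟨ψ', hx', _⟩ := a.1.2
        have h := mem_fix_phiFun A (⟨ψ', hx'⟩ : ∃ ψ'' : P →* S, a.1.1 ∈ A.Fix P ψ'')
        rwa [a.2] at h
      rw [Nat.card_congr hequiv]
      exact hc_all ψ hne
  -- fibers of the subgroup-class map
  set Jb := Quotient (subSetoid S) with hJbdef
  set gY : ↥Yset → Jb :=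
    fun w => Quotient.mk (subSetoid S) (phiFun A P w.1).range with hgYdef
  have hfibg : ∀ R : Subgroup S,
      Nat.card {w : ↥Yset // gY w = Quotient.mk (subSetoid S) R} =
      Nat.card ↥{x : X | ∃ ψ : P →* S, x ∈ A.Fix P ψ ∧
        ∃ s : S, ψ.range = R.map (MulAut.conj s).toMonoidHom} := by
    intro R
    apply Nat.card_congr
    refine (subSubEquiv Yset (fun x =>
      Quotient.mk (subSetoid S) (phiFun A P x).range = Quotient.mk (subSetoid S) R)).trans
      (Equiv.setCongr ?_)
    ext x
    simp only [Set.mem_setOf_eq]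
    constructor
    · rintro ⟨hxY, hmk⟩
      exact ⟨phiFun A P x, mem_fix_phiFun A hxY, (subSetoid S).iseqv.symm (Quotient.exact hmk)⟩
    · rintro ⟨ψ, hx, hrel⟩
      refine ⟨⟨ψ, hx⟩, ?_⟩
      rw [phiFun_eq A hA hx]
      exact Quotient.sound ((subSetoid S).iseqv.symm hrel)
  have hYRinv : ∀ R : Subgroup S, ∀ (t : S),
      ∀ x ∈ {x : X | ∃ ψ : P →* S, x ∈ A.Fix P ψ ∧
        ∃ s : S, ψ.range = R.map (MulAut.conj s).toMonoidHom},
      A.smul t x ∈ {x : X | ∃ ψ : P →* S, x ∈ A.Fix P ψ ∧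
        ∃ s : S, ψ.range = R.map (MulAut.conj s).toMonoidHom} := by
    rintro R t x ⟨ψ, hx, s, hr⟩
    refine ⟨conjComp t ψ, fix_smul_mem A t hx, t * s, ?_⟩
    rw [range_conjComp, hr, Subgroup.map_map, conj_hom_comp]
  have hdvdSg : ∀ j : Jb, Nat.card S ∣ Nat.card {w : ↥Yset // gY w = j} := by
    intro j
    induction j using Quotient.ind with
    | _ R =>
      rw [hfibg R, card_invariant_set A hA _ (hYRinv R)]
      exact dvd_mul_left _ _
  -- master counting formula for subgroup classes
  have hmasterb : ∀ R : Subgroup S,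
      (Nat.card {w : ↥Yset // gY w = Quotient.mk (subSetoid S) R} / Nat.card S) *
        Nat.card (Subgroup.normalizer (R : Set S)) =
      Nat.card {ψ : P →* S // (A.Fix P ψ).Nonempty ∧ ψ.range = R} * c := by
    intro R
    have h1 : Nat.card ↥{x : X | ∃ ψ : P →* S, x ∈ A.Fix P ψ ∧
        ∃ s : S, ψ.range = R.map (MulAut.conj s).toMonoidHom} =
        Nat.card {R' : Subgroup S // ∃ s : S, R' = R.map (MulAut.conj s).toMonoidHom} *
          (Nat.card {ψ : P →* S // (A.Fix P ψ).Nonempty ∧ ψ.range = R} * c) := by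
      apply card_of_const_fibers (fun x => (phiFun A P x.1).range)
        {R' : Subgroup S | ∃ s : S, R' = R.map (MulAut.conj s).toMonoidHom}
      · rintro ⟨x, ψ, hx, s, hr⟩
        rw [phiFun_eq A hA hx]
        exact ⟨s, hr⟩
      · rintro R' ⟨s, rfl⟩
        have hequiv : {a : ↥{x : X | ∃ ψ : P →* S, x ∈ A.Fix P ψ ∧
            ∃ t : S, ψ.range = R.map (MulAut.conj t).toMonoidHom} //
            (phiFun A P a.1).range = R.map (MulAut.conj s).toMonoidHom} ≃
            ↥{x : X | ∃ ψ : P →* S, x ∈ A.Fix P ψ ∧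
              ψ.range = R.map (MulAut.conj s).toMonoidHom} := by
          refine ⟨fun a => ⟨a.1.1, ?_⟩,
            fun x => ⟨⟨x.1, x.2.choose, x.2.choose_spec.1, s, x.2.choose_spec.2⟩, by
              rw [phiFun_eq A hA x.2.choose_spec.1]
              exact x.2.choose_spec.2⟩,
            fun a => Subtype.ext (Subtype.ext rfl), fun x => Subtype.ext rfl⟩
          obtain ⟨ψ, hx, t, hr⟩ := a.1.2
          exact ⟨phiFun A P a.1.1, mem_fix_phiFun A ⟨ψ, hx⟩, a.2⟩
        rw [Nat.card_congr hequiv, hYim, halphaS]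
    have h2 := card_conjClass_subgroup R
    set F := Nat.card {w : ↥Yset // gY w = Quotient.mk (subSetoid S) R} with hF
    set al := Nat.card {ψ : P →* S // (A.Fix P ψ).Nonempty ∧ ψ.range = R} with hal
    have h3 : F * Nat.card (Subgroup.normalizer (R : Set S)) = Nat.card S * (al * c) := by
      rw [hF, hfibg R, h1, mul_right_comm, h2]
    have h4 : F / Nat.card S * Nat.card S = F := Nat.div_mul_cancel (hdvdSg _)
    apply Nat.eq_of_mul_eq_mul_right (Nat.pos_of_ne_zero hSpos)
    calc F / Nat.card S * Nat.card (Subgroup.normalizer (R : Set S)) * Nat.card S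
        = F / Nat.card S * Nat.card S * Nat.card (Subgroup.normalizer (R : Set S)) := by ring
      _ = F * Nat.card (Subgroup.normalizer (R : Set S)) := by rw [h4]
      _ = Nat.card S * (al * c) := h3
      _ = al * c * Nat.card S := mul_comm _ _
  -- identify `|Aut_C(Q)|` with `alpha Q`
  have halphaQ : Nat.card ↥(preFixHom A Q Q) =
      Nat.card {ψ : P →* S // (A.Fix P ψ).Nonempty ∧ ψ.range = Q} := by
    rw [← hcardPQ]
    apply Nat.card_congr
    apply Equiv.subtypeEquivRight
    intro ψ'
    constructor
    · intro h
      exact ⟨h.2.2, hrPQ ψ' h⟩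
    · rintro ⟨h1, h2⟩
      exact ⟨(mem_preFix_top A hA h1).1, fun u => h2 ▸ ⟨u, rfl⟩, h1⟩
  -- alpha is constant on realized image subgroups
  have hstep : ∀ (ψa ψb : P →* S), ψa ∈ preFixHom A P ⊤ → ψb ∈ preFixHom A P ⊤ →
      Nat.card {χ : P →* S // (A.Fix P χ).Nonempty ∧ χ.range = ψa.range} ≤
      Nat.card {χ : P →* S // (A.Fix P χ).Nonempty ∧ χ.range = ψb.range} := by
    intro ψa ψb hψa hψb
    have hmem : ∀ χ : {χ : P →* S // (A.Fix P χ).Nonempty ∧ χ.range = ψa.range},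
        compHom (transHom ψa ψb hψa.1) χ.1
          (fun u => le_of_eq χ.2.2 ⟨u, rfl⟩) ∈
          preFixHom A P ψb.range := by
      intro χ
      exact compHom_mem hlw
        (⟨(mem_preFix_top A hA χ.2.1).1, fun u => le_of_eq χ.2.2 ⟨u, rfl⟩,
          χ.2.1⟩ : χ.1 ∈ preFixHom A P ψa.range)
        (transHom_mem hlw hψa hψb) χ.2.2 (range_transHom ψa ψb hψa.1)
    apply Nat.card_le_card_of_injective (fun χ =>
      (⟨compHom (transHom ψa ψb hψa.1) χ.1
          (fun u => le_of_eq χ.2.2 ⟨u, rfl⟩),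
        (hmem χ).2.2,
        by rw [range_compHom _ _ _ χ.2.2, range_transHom]⟩))
    intro χ₁ χ₂ heq
    apply Subtype.ext
    ext u
    have h1 := DFunLike.congr_fun (congrArg Subtype.val heq) u
    rw [compHom_apply, compHom_apply] at h1
    have hinj := (transHom_mem hlw hψa hψb).1
    have h2 := hinj h1
    exact congrArg Subtype.val h2
  have halphaconst : ∀ ψ : P →* S, ψ ∈ preFixHom A P ⊤ →
      Nat.card {χ : P →* S // (A.Fix P χ).Nonempty ∧ χ.range = ψ.range} =
      Nat.card {χ : P →* S // (A.Fix P χ).Nonempty ∧ χ.range = Q} := by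
    intro ψ hψ
    have h1 := hstep ψ φ hψ hφ
    have h2 := hstep φ ψ hφ hψ
    exact le_antisymm h1 h2
  -- extraction of a maximal normalizer class
  obtain ⟨jb, hjb⟩ := exists_fiber_not_dvd gY
    (fun j => Nat.card {w : ↥Yset // gY w = j} / Nat.card S) hSpos hYcard
    (fun j => (Nat.div_mul_cancel (hdvdSg j)).symm) hN
  have hfneb : Nat.card {w : ↥Yset // gY w = jb} ≠ 0 := by
    intro h0
    apply hjb
    rw [h0, Nat.zero_div]
    exact dvd_zero p
  obtain ⟨wb, hwb⟩ : ∃ w : ↥Yset, gY w = jb := by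
    by_contra hcon
    push_neg at hcon
    haveI : IsEmpty {w : ↥Yset // gY w = jb} := ⟨fun z => hcon z.1 z.2⟩
    exact hfneb Nat.card_of_isEmpty
  set ψb := phiFun A P wb.1 with hψbdef
  have hψbfix : wb.1 ∈ A.Fix P ψb := mem_fix_phiFun A wb.2
  have hψb : ψb ∈ preFixHom A P ⊤ := mem_preFix_top A hA ⟨wb.1, hψbfix⟩
  have hjbeq : jb = Quotient.mk (subSetoid S) ψb.range := hwb.symm
  set alQ := Nat.card {χ : P →* S // (A.Fix P χ).Nonempty ∧ χ.range = Q} with halQ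
  have hNdvd : ∀ ψ : P →* S, ψ ∈ preFixHom A P ⊤ →
      Nat.card (Subgroup.normalizer (ψ.range : Set S)) ∣ alQ * c := by
    intro ψ hψ
    refine ⟨Nat.card {w : ↥Yset // gY w = Quotient.mk (subSetoid S) ψ.range} / Nat.card S, ?_⟩
    rw [← halphaconst ψ hψ, ← hmasterb ψ.range, mul_comm]
  have hbaseb : ¬ p ∣ (alQ * c) / Nat.card (Subgroup.normalizer (ψb.range : Set S)) := by
    have hm := hmasterb ψb.range
    rw [halphaconst ψb hψb] at hm
    have hq : (alQ * c) / Nat.card (Subgroup.normalizer (ψb.range : Set S)) =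
        Nat.card {w : ↥Yset // gY w = Quotient.mk (subSetoid S) ψb.range} / Nat.card S := by
      rw [← hm, Nat.mul_div_cancel _ (Nat.pos_of_ne_zero (hsubpos _))]
    rw [hq, ← hjbeq]
    exact hjb
  have partb2 : (preFixHom A).FullyNormalized Q ↔
      ¬ p ∣ (Nat.card ↥(preFixHom A Q Q) * c) / Nat.card (Subgroup.normalizer (Q : Set S)) := by
    rw [halphaQ]
    constructor
    · intro hFN
      have hle := hFN ψb.range (hrangeconj ψb hψb)
      exact (pow_divisor_compare hp (hNdvd φ hφ) (hNdvd ψb hψb)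
        (hsubpow _) (hsubpow _) hbaseb).mpr hle
    · intro hnd R hconj
      obtain ⟨ψ', hψ', hr'⟩ := hconjrange R hconj
      rw [← hr']
      exact pow_divisor_le hp (hNdvd ψ' hψ') (hNdvd φ hφ)
        (hsubpow _) (hsubpow _) hnd
  exact ⟨parta, hb1, partb2⟩
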